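/- arXiv:2108.12417 — 4 statements merged into one kernel-verified Lean document; each statement's English description precedes it below -/
import Mathlib

section
/- For every non-negative integer n and i ≥ 0 with n < 2^i, the number of i-bit BSD representations of n having exactly ℓ zero digits equals the coefficient of t^ℓ in the Stern polynomial B_{2^i - n}(t). -/
open Polynomial in
/-- The Stern polynomial: `B 0 = 0`, `B 1 = 1`, `B (2n) = t * B n`, `B (2n+1) = B n + B (n+1)`. -/
noncomputable def sternP : ℕ → Polynomial ℕ
  | 0 => 0
  | 1 => 1
  | n + 2 =>
    if (n + 2) % 2 = 0 then X * sternP (n / 2 + 1)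
    else sternP (n / 2 + 1) + sternP (n / 2 + 2)
decreasing_by all_goals omega

/-- The digits of a BSD representation lie in {-1, 0, 1}. -/
def IsBSDDigits {i : ℕ} (b : Fin i → ℤ) : Prop := ∀ j, b j ∈ ({-1, 0, 1} : Set ℤ)

/-- The value represented by the digit string `b` (least significant digit `b 0`). -/
def bsdVal {i : ℕ} (b : Fin i → ℤ) : ℤ := ∑ j : Fin i, b j * 2 ^ (j : ℕ)

/-- `b` is a (not necessarily reduced) non-adjacent form digit string of length `k`:
digits in {-1,0,1}, no two adjacent digits both nonzero, and nonzero leading digit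
(when `k > 0`). -/
def IsReducedNAF {k : ℕ} (b : Fin k → ℤ) : Prop :=
  IsBSDDigits b ∧
  (∀ j : Fin k, ∀ h : (j : ℕ) + 1 < k, b j = 0 ∨ b ⟨(j : ℕ) + 1, h⟩ = 0) ∧
  (∀ h : 0 < k, b ⟨k - 1, Nat.sub_lt h one_pos⟩ ≠ 0)

/-- `m` has a reduced NAF representation of bitlength `k`. -/
def HasNAFLen (m : ℤ) (k : ℕ) : Prop :=
  ∃ b : Fin k → ℤ, IsReducedNAF b ∧ bsdVal b = m

/-- `I k`: the set of positive integers of NAF-bitlength `k`. -/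
def NAFInterval (k : ℕ) : Set ℕ := {n : ℕ | HasNAFLen (n : ℤ) k}

/-- `a k = min I k`: `a 1 = 1`, `a 2 = 2`, `a k = 2^(k-2) + a (k-2)`. -/
def aseq : ℕ → ℕ
  | 0 => 0
  | 1 => 1
  | 2 => 2
  | k + 3 => 2 ^ (k + 1) + aseq (k + 1)

/-- The NAF-bitlength of `n`. -/
noncomputable def nafLen (n : ℕ) : ℕ := sInf {k : ℕ | HasNAFLen (n : ℤ) k}

/-- The minimal Hamming weight of a BSD representation of `n` of length
equal to its NAF-bitlength. -/
noncomputable def minWeight (n : ℕ) : ℕ :=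
  sInf {w : ℕ | ∃ b : Fin (nafLen n) → ℤ,
    IsBSDDigits b ∧ bsdVal b = (n : ℤ) ∧ {j | b j ≠ 0}.ncard = w}

/-- `Z n`: the number of zeros in an optimal (minimal-weight) BSD representation of `n`
of length equal to its NAF-bitlength. -/
noncomputable def Zfun (n : ℕ) : ℕ := nafLen n - minWeight n

/-- `M n`: the number of optimal (minimal-weight) BSD representations of `n`
of length equal to its NAF-bitlength. -/
noncomputable def Mfun (n : ℕ) : ℕ :=
  {b : Fin (nafLen n) → ℤ |
    IsBSDDigits b ∧ bsdVal b = (n : ℤ) ∧ {j | b j ≠ 0}.ncard = minWeight n}.ncard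

lemma sternP_zero : sternP 0 = 0 := by simp [sternP]
lemma sternP_one : sternP 1 = 1 := by simp [sternP]

lemma sternP_even (m : ℕ) : sternP (2 * m) = Polynomial.X * sternP m := by
  match m with
  | 0 => simp [sternP]
  | m + 1 =>
    rw [show 2 * (m + 1) = 2 * m + 2 by ring, sternP]
    have h1 : (2 * m + 2) % 2 = 0 := by omega
    have h2 : 2 * m / 2 + 1 = m + 1 := by omega
    simp [h1, h2]

lemma sternP_odd (m : ℕ) : sternP (2 * m + 1) = sternP m + sternP (m + 1) := by
  match m with
  | 0 => simp [sternP]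
  | m + 1 =>
    rw [show 2 * (m + 1) + 1 = (2 * m + 1) + 2 by ring, sternP]
    have h1 : (2 * m + 1 + 2) % 2 = 1 := by omega
    have h2 : (2 * m + 1) / 2 + 1 = m + 1 := by omega
    have h3 : (2 * m + 1) / 2 + 2 = m + 2 := by omega
    simp [h1, h2, h3]

def bsdSet (i : ℕ) (n : ℤ) (ℓ : ℕ) : Set (Fin i → ℤ) :=
  {b | IsBSDDigits b ∧ bsdVal b = n ∧ {j | b j = 0}.ncard = ℓ}

lemma zcard_eq {i : ℕ} (b : Fin i → ℤ) :
    {j | b j = 0}.ncard = ∑ j : Fin i, if b j = 0 then 1 else 0 := by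
  have h : {j | b j = 0} = ↑(Finset.univ.filter fun j => b j = 0) := by ext j; simp
  rw [h, Set.ncard_coe_finset, Finset.card_filter]

lemma bsdVal_cons {i : ℕ} (c : ℤ) (b : Fin i → ℤ) :
    bsdVal (Fin.cons c b) = c + 2 * bsdVal b := by
  unfold bsdVal
  rw [Fin.sum_univ_succ, Finset.mul_sum]
  simp only [Fin.cons_zero, Fin.cons_succ, Fin.val_succ, Fin.val_zero, pow_zero, mul_one,
    pow_succ]
  congr 1
  exact Finset.sum_congr rfl fun j _ => by ring

lemma isBSD_cons {i : ℕ} {c : ℤ} {b : Fin i → ℤ} :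
    IsBSDDigits (Fin.cons c b) ↔ (c = -1 ∨ c = 0 ∨ c = 1) ∧ IsBSDDigits b := by
  unfold IsBSDDigits
  rw [Fin.forall_fin_succ]
  simp [Fin.cons_zero, Fin.cons_succ, Set.mem_insert_iff]

lemma zcard_cons {i : ℕ} {c : ℤ} {b : Fin i → ℤ} :
    {j | (Fin.cons c b : Fin (i + 1) → ℤ) j = 0}.ncard
      = (if c = 0 then 1 else 0) + {j | b j = 0}.ncard := by
  rw [zcard_eq, zcard_eq, Fin.sum_univ_succ]
  simp only [Fin.cons_zero, Fin.cons_succ]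

lemma bsdSet_finite (i : ℕ) (n : ℤ) (ℓ : ℕ) : (bsdSet i n ℓ).Finite := by
  apply Set.Finite.subset (Set.Finite.pi (fun _ : Fin i =>
    (((Set.finite_singleton (1 : ℤ)).insert 0).insert (-1))))
  intro b hb
  rw [Set.mem_pi]
  exact fun j _ => hb.1 j

lemma geom_two (i : ℕ) : ∑ j ∈ Finset.range i, (2 : ℤ) ^ j = 2 ^ i - 1 := by
  induction i with
  | zero => simp
  | succ k ih => rw [Finset.sum_range_succ, ih]; ring

lemma bsdVal_lt {i : ℕ} {b : Fin i → ℤ} (hb : IsBSDDigits b) : bsdVal b < 2 ^ i := by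
  have h1 : bsdVal b ≤ ∑ j : Fin i, (2 : ℤ) ^ (j : ℕ) := by
    apply Finset.sum_le_sum
    intro j _
    have hj := hb j
    simp only [Set.mem_insert_iff, Set.mem_singleton_iff] at hj
    have hle : b j ≤ 1 := by rcases hj with h | h | h <;> simp [h]
    calc b j * 2 ^ (j : ℕ) ≤ 1 * 2 ^ (j : ℕ) :=
          mul_le_mul_of_nonneg_right hle (by positivity)
      _ = 2 ^ (j : ℕ) := one_mul _
  have h2 : ∑ j : Fin i, (2 : ℤ) ^ (j : ℕ) = 2 ^ i - 1 := by
    rw [Fin.sum_univ_eq_sum_range]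
    exact geom_two i
  linarith

lemma mem_bsdSet_succ {i : ℕ} {n : ℤ} {ℓ : ℕ} {b : Fin (i + 1) → ℤ} :
    b ∈ bsdSet (i + 1) n ℓ ↔ (b 0 = -1 ∨ b 0 = 0 ∨ b 0 = 1) ∧ IsBSDDigits (Fin.tail b) ∧
      b 0 + 2 * bsdVal (Fin.tail b) = n ∧
      (if b 0 = 0 then 1 else 0) + {j | Fin.tail b j = 0}.ncard = ℓ := by
  conv_lhs => rw [← Fin.cons_self_tail b]
  simp only [bsdSet, Set.mem_setOf_eq, isBSD_cons, bsdVal_cons, zcard_cons, Fin.cons_zero]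
  tauto

lemma even_decomp {i : ℕ} {m : ℤ} {ℓ : ℕ} :
    bsdSet (i + 1) (2 * m) (ℓ + 1) = Fin.cons 0 '' bsdSet i m ℓ := by
  ext b
  rw [Set.mem_image, mem_bsdSet_succ]
  constructor
  · rintro ⟨h0, hd, hv, hz⟩
    have hb0 : b 0 = 0 := by omega
    rw [hb0] at hv hz
    rw [if_pos rfl] at hz
    exact ⟨Fin.tail b, ⟨hd, by omega, by omega⟩, by rw [← hb0]; exact Fin.cons_self_tail b⟩
  · rintro ⟨x, ⟨hd, hv, hz⟩, rfl⟩
    refine ⟨?_, ?_, ?_, ?_⟩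
    · rw [Fin.cons_zero]; tauto
    · rw [Fin.tail_cons]; exact hd
    · rw [Fin.cons_zero, Fin.tail_cons, hv]; ring
    · rw [Fin.cons_zero, Fin.tail_cons, if_pos rfl, hz]; omega

lemma even_decomp_zero {i : ℕ} {m : ℤ} :
    bsdSet (i + 1) (2 * m) 0 = ∅ := by
  ext b
  simp only [Set.mem_empty_iff_false, iff_false]
  rw [mem_bsdSet_succ]
  rintro ⟨h0, hd, hv, hz⟩
  have hb0 : b 0 = 0 := by omega
  rw [hb0, if_pos rfl] at hz
  omega

lemma odd_decomp {i : ℕ} {m : ℤ} {ℓ : ℕ} :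
    bsdSet (i + 1) (2 * m + 1) ℓ
      = Fin.cons 1 '' bsdSet i m ℓ ∪ Fin.cons (-1) '' bsdSet i (m + 1) ℓ := by
  ext b
  rw [Set.mem_union, Set.mem_image, Set.mem_image, mem_bsdSet_succ]
  constructor
  · rintro ⟨h0, hd, hv, hz⟩
    rcases h0 with h | h | h
    · right
      rw [h] at hv hz
      rw [if_neg (by norm_num)] at hz
      simp only [zero_add] at hz
      exact ⟨Fin.tail b, ⟨hd, by omega, hz⟩, by rw [← h]; exact Fin.cons_self_tail b⟩
    · exfalso; rw [h] at hv; omega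
    · left
      rw [h] at hv hz
      rw [if_neg (by norm_num)] at hz
      simp only [zero_add] at hz
      exact ⟨Fin.tail b, ⟨hd, by omega, hz⟩, by rw [← h]; exact Fin.cons_self_tail b⟩
  · rintro (⟨x, ⟨hd, hv, hz⟩, rfl⟩ | ⟨x, ⟨hd, hv, hz⟩, rfl⟩) <;>
      refine ⟨?_, ?_, ?_, ?_⟩
    · rw [Fin.cons_zero]; tauto
    · rw [Fin.tail_cons]; exact hd
    · rw [Fin.cons_zero, Fin.tail_cons, hv]; ring
    · rw [Fin.cons_zero, Fin.tail_cons, if_neg (by norm_num), zero_add, hz]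
    · rw [Fin.cons_zero]; tauto
    · rw [Fin.tail_cons]; exact hd
    · rw [Fin.cons_zero, Fin.tail_cons, hv]; ring
    · rw [Fin.cons_zero, Fin.tail_cons, if_neg (by norm_num), zero_add, hz]

lemma bsd_key : ∀ i n ℓ : ℕ, n ≤ 2 ^ i →
    (bsdSet i (n : ℤ) ℓ).ncard = (sternP (2 ^ i - n)).coeff ℓ := by
  intro i
  induction i with
  | zero =>
    intro n ℓ hn
    interval_cases n
    · -- n = 0
      have hset : bsdSet 0 (0 : ℤ) ℓ = if ℓ = 0 then Set.univ else ∅ := by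
        ext b
        have hd : IsBSDDigits b := fun j => j.elim0
        have hv : bsdVal b = 0 := by simp [bsdVal]
        have hz : {j | b j = 0}.ncard = 0 := by
          rw [zcard_eq]; simp
        by_cases hℓ : ℓ = 0
        · simp [bsdSet, hd, hv, hz, hℓ]
        · simp only [bsdSet, Set.mem_setOf_eq, hd, hv, hz, if_neg hℓ, true_and,
            Set.mem_empty_iff_false, iff_false]
          omega
      rw [Nat.cast_zero, hset]
      by_cases hℓ : ℓ = 0
      · rw [if_pos hℓ, hℓ]
        simp only [pow_zero, Nat.sub_zero, sternP_one, Polynomial.coeff_one_zero]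
        rw [Set.ncard_univ]
        simp [Nat.card_eq_fintype_card]
      · rw [if_neg hℓ, Set.ncard_empty]
        simp only [pow_zero, Nat.sub_zero, sternP_one]
        rw [Polynomial.coeff_one, if_neg hℓ]
    · -- n = 1
      have hset : bsdSet 0 (1 : ℤ) ℓ = ∅ := by
        ext b
        have hv : bsdVal b = 0 := by simp [bsdVal]
        simp [bsdSet, hv]
      rw [Nat.cast_one, hset, Set.ncard_empty, show 2 ^ 0 - 1 = 0 from rfl, sternP_zero,
        Polynomial.coeff_zero]
  | succ i ih =>
    intro n ℓ hn
    have hpow : 2 ^ (i + 1) = 2 * 2 ^ i := by rw [pow_succ]; ring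
    rcases eq_or_lt_of_le hn with heq | hlt
    · -- n = 2^(i+1)
      have hset : bsdSet (i + 1) ((n : ℕ) : ℤ) ℓ = ∅ := by
        ext b
        simp only [bsdSet, Set.mem_setOf_eq, Set.mem_empty_iff_false, iff_false]
        rintro ⟨h1, h2, -⟩
        have hlt := bsdVal_lt h1
        rw [h2, heq] at hlt
        push_cast at hlt
        linarith
      rw [hset, Set.ncard_empty, heq, Nat.sub_self, sternP_zero, Polynomial.coeff_zero]
    · rcases Nat.even_or_odd n with ⟨m, hm⟩ | ⟨m, hm⟩
      · -- n = 2 * m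
        have hm' : n = 2 * m := by omega
        have hmlt : m < 2 ^ i := by omega
        have harith : 2 ^ (i + 1) - n = 2 * (2 ^ i - m) := by omega
        have hcast : ((n : ℕ) : ℤ) = 2 * (m : ℤ) := by push_cast [hm']; ring
        rw [harith, sternP_even, hcast]
        cases ℓ with
        | zero =>
          rw [even_decomp_zero, Set.ncard_empty, Polynomial.mul_coeff_zero,
            Polynomial.coeff_X_zero, zero_mul]
        | succ ℓ' =>
          rw [even_decomp, Set.ncard_image_of_injective _ (Fin.cons_right_injective 0),
            ih m ℓ' hmlt.le, Polynomial.coeff_X_mul]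
      · -- n = 2 * m + 1
        have hm1 : m + 1 ≤ 2 ^ i := by omega
        have harith : 2 ^ (i + 1) - n = 2 * (2 ^ i - (m + 1)) + 1 := by omega
        have harith2 : 2 ^ i - (m + 1) + 1 = 2 ^ i - m := by omega
        have hcast : ((n : ℕ) : ℤ) = 2 * (m : ℤ) + 1 := by push_cast [hm]; ring
        rw [harith, sternP_odd, harith2, Polynomial.coeff_add, hcast, odd_decomp]
        rw [Set.ncard_union_eq ?_ ?_ ?_]
        · rw [Set.ncard_image_of_injective _ (Fin.cons_right_injective 1),
            Set.ncard_image_of_injective _ (Fin.cons_right_injective (-1))]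
          have e1 : ((m : ℤ) + 1) = ((m + 1 : ℕ) : ℤ) := by push_cast; ring
          rw [ih m ℓ (by omega), e1, ih (m + 1) ℓ hm1]
          omega
        · rw [Set.disjoint_left]
          rintro b ⟨x, -, rfl⟩ ⟨y, -, hy⟩
          have h0 := congrFun hy 0
          rw [Fin.cons_zero, Fin.cons_zero] at h0
          norm_num at h0
        · exact (bsdSet_finite _ _ _).image _
        · exact (bsdSet_finite _ _ _).image _


theorem bsd_weight_distribution (n i ℓ : ℕ) (h : n < 2 ^ i) :
    {b : Fin i → ℤ | IsBSDDigits b ∧ bsdVal b = (n : ℤ) ∧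
        {j | b j = 0}.ncard = ℓ}.ncard
      = (sternP (2 ^ i - n)).coeff ℓ := by
  exact bsd_key i n ℓ h.le
end

section
/- If n has NAF-bitlength k (i.e. n ∈ I_k), then deg(B_{2^k - n}) = deg(B_n), where B denotes the Stern polynomial. -/
section SternAux
open Polynomial

lemma stern_even (n : ℕ) : sternP (2*n) = X * sternP n := by
  match n with
  | 0 => simp [sternP]
  | (m+1) =>
    rw [show 2*(m+1) = 2*m+2 by ring, sternP, if_pos (show (2*m+2) % 2 = 0 by omega),
      show 2*m/2 = m from by omega]

lemma stern_odd (n : ℕ) : sternP (2*n+1) = sternP n + sternP (n+1) := by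
  match n with
  | 0 => simp [sternP]
  | (m+1) =>
    rw [show 2*(m+1)+1 = (2*m+1)+2 by ring, sternP, if_neg (show ¬((2*m+1+2) % 2 = 0) by omega),
      show (2*m+1)/2 = m from by omega]

lemma stern_ne_zero : ∀ n, 0 < n → sternP n ≠ 0 := by
  intro n
  induction n using Nat.strong_induction_on with
  | _ n IH =>
  intro hn
  rcases Nat.even_or_odd n with ⟨m, hm⟩ | ⟨m, hm⟩
  · subst hm
    rw [show m + m = 2*m by ring, stern_even]
    exact mul_ne_zero X_ne_zero (IH m (by omega) (by omega))
  · subst hm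
    rcases Nat.eq_zero_or_pos m with rfl | hm1
    · simp [sternP]
    rw [stern_odd]
    intro h
    have h2 : sternP (m+1) = 0 := by
      ext i
      have := congrArg (fun p => Polynomial.coeff p i) h
      simp only [coeff_add, coeff_zero] at this
      simp only [coeff_zero]
      omega
    exact IH (m+1) (by omega) (by omega) h2

lemma natDegree_add_max (p q : Polynomial ℕ) :
    (p + q).natDegree = max p.natDegree q.natDegree := by
  rcases eq_or_ne p 0 with rfl | hp; · simp
  rcases eq_or_ne q 0 with rfl | hq; · simp
  refine le_antisymm (natDegree_add_le p q) (max_le ?_ ?_)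
  · apply le_natDegree_of_ne_zero
    have h1 : p.coeff p.natDegree ≠ 0 := fun h => hp (leadingCoeff_eq_zero.mp h)
    simp only [coeff_add]
    omega
  · apply le_natDegree_of_ne_zero
    have h1 : q.coeff q.natDegree ≠ 0 := fun h => hq (leadingCoeff_eq_zero.mp h)
    simp only [coeff_add]
    omega

lemma deg_stern_even (n : ℕ) (hn : 0 < n) :
    (sternP (2*n)).natDegree = (sternP n).natDegree + 1 := by
  rw [stern_even, natDegree_mul X_ne_zero (stern_ne_zero n hn), natDegree_X]
  omega

lemma deg_stern_odd (n : ℕ) :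
    (sternP (2*n+1)).natDegree = max (sternP n).natDegree (sternP (n+1)).natDegree := by
  rw [stern_odd, natDegree_add_max]


lemma two_pow_mod_three (t : ℕ) : 2^t % 3 = 1 ∨ 2^t % 3 = 2 := by
  induction t with
  | zero => decide
  | succ t ih =>
    have h : 2^(t+1) = 2*2^t := by ring
    omega

lemma key : ∀ k n : ℕ, 2^k < 3*n → 3*n < 2^(k+1) →
    (sternP (2^k - n)).natDegree = (sternP n).natDegree := by
  intro k
  induction k using Nat.strong_induction_on with
  | _ k IH =>
  rcases k with _ | _ | j
  · intro n h1 h2; norm_num at h1 h2; omega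
  · intro n h1 h2
    have hn : n = 1 := by norm_num at h1 h2; omega
    subst hn
    norm_num
  · intro n h1 h2
    have hQ : (2:ℕ)^(j+1+1) = 2*2^(j+1) := by ring
    have hQ2 : (2:ℕ)^(j+1+1+1) = 4*2^(j+1) := by ring
    set Q := 2^(j+1) with hQdef
    have hQpos : 2 ≤ Q := by
      have : (2:ℕ)^1 ≤ 2^(j+1) := Nat.pow_le_pow_right (by norm_num) (by omega)
      simpa using this
    have h3Q : Q % 3 = 1 ∨ Q % 3 = 2 := two_pow_mod_three (j+1)
    rw [hQ] at h1 ⊢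
    rw [hQ2] at h2
    rcases Nat.even_or_odd n with ⟨m, hm⟩ | ⟨m, hm⟩
    · subst hm
      have key1 : 2*Q - (m+m) = 2*(Q-m) := by omega
      rw [key1, show m + m = 2*m by ring, stern_even, stern_even,
        natDegree_mul X_ne_zero (stern_ne_zero _ (by omega)),
        natDegree_mul X_ne_zero (stern_ne_zero _ (by omega))]
      have hIH := IH (j+1) (by omega) m (by omega) (by rw [hQ]; omega)
      rw [← hQdef] at hIH
      rw [hIH]
    · subst hm
      have hmQ : m + 1 < Q := by omega
      have key1 : 2*Q - (2*m+1) = 2*(Q-m-1)+1 := by omega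
      rw [key1, stern_odd, stern_odd, natDegree_add_max, natDegree_add_max,
        show Q - m - 1 + 1 = Q - m by omega]
      by_cases hA : 6*m+3 = 2*Q+1
      · -- bottom boundary : Q = 3m+1, Q-m-1 = 2m, Q-m = 2m+1
        have hm1 : 1 ≤ m := by omega
        have e4 : Q - m - 1 = 2*m := by omega
        have e5 : Q - m = 2*m+1 := by omega
        rw [e4, e5, stern_odd, natDegree_add_max]
        have hIH := IH (j+1) (by omega) (m+1) (by omega) (by rw [hQ]; omega)
        rw [← hQdef, show Q - (m+1) = 2*m by omega] at hIH
        rw [hIH]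
        omega
      · by_cases hB : 6*m+3 = 4*Q - 1
        · -- top boundary : 2Q = 3m+2, m = 2*(Q-m-1)
          have hm1 : 2 ≤ m := by omega
          have e4 : m = 2*(Q-m-1) := by omega
          have hIH := IH (j+1) (by omega) m (by omega) (by rw [hQ]; omega)
          rw [← hQdef] at hIH
          conv_rhs => rw [show m + 1 = 2*(Q-m-1)+1 by omega]
          rw [stern_odd, natDegree_add_max, show Q - m - 1 + 1 = Q - m by omega, hIH]
          omega
        · -- generic
          have hIHm := IH (j+1) (by omega) m (by omega) (by rw [hQ]; omega)
          have hIHm1 := IH (j+1) (by omega) (m+1) (by omega) (by rw [hQ]; omega)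
          rw [← hQdef] at hIHm hIHm1
          rw [show Q - (m+1) = Q - m - 1 by omega] at hIHm1
          rw [hIHm, hIHm1]
          omega

end SternAux


def NoAdj {k : ℕ} (b : Fin k → ℤ) : Prop :=
  ∀ j : Fin k, ∀ h : (j : ℕ) + 1 < k, b j = 0 ∨ b ⟨(j : ℕ) + 1, h⟩ = 0

lemma bsdVal_succ {k : ℕ} (b : Fin (k+1) → ℤ) :
    bsdVal b = bsdVal (Fin.init b) + b (Fin.last k) * 2^k := by
  simp [bsdVal, Fin.sum_univ_castSucc, Fin.init]

lemma init_digits {k : ℕ} {b : Fin (k+1) → ℤ} (h : IsBSDDigits b) :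
    IsBSDDigits (Fin.init b) := fun j => h _

lemma init_noadj {k : ℕ} {b : Fin (k+1) → ℤ} (h : NoAdj b) : NoAdj (Fin.init b) := by
  intro j hj
  have := h j.castSucc (by simp)
  simpa [Fin.init, Fin.castSucc, Fin.castAdd, Fin.castLE] using this

lemma naf_main : ∀ k : ℕ, ∀ b : Fin k → ℤ, IsBSDDigits b → NoAdj b →
    3 * |bsdVal b| < 2^(k+1) ∧
    ∀ (h : 0 < k), b ⟨k-1, Nat.sub_lt h one_pos⟩ = 1 → (2:ℤ)^k < 3 * bsdVal b := by
  intro k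
  induction k using Nat.strong_induction_on with
  | _ k IH =>
  rcases k with _ | k
  · intro b _ _
    refine ⟨by simp [bsdVal], fun h => absurd h (by omega)⟩
  intro b hd hna
  have hdec := bsdVal_succ b
  have hlasteq : (⟨k+1-1, Nat.sub_lt (by omega) one_pos⟩ : Fin (k+1)) = Fin.last k := rfl
  rcases k with _ | k
  · -- length 1
    have h0 := hd (Fin.last 0)
    simp only [Set.mem_insert_iff, Set.mem_singleton_iff] at h0
    have hval : bsdVal b = b (Fin.last 0) := by
      have : bsdVal (Fin.init b) = 0 := by simp [bsdVal]
      rw [hdec, this]; ring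
    constructor
    · rw [hval]; rcases h0 with h|h|h <;> rw [h] <;> norm_num
    · intro h hb
      rw [hlasteq] at hb
      rw [hval, hb]; norm_num
  · -- length k+2
    have hlast := hd (Fin.last (k+1))
    simp only [Set.mem_insert_iff, Set.mem_singleton_iff] at hlast
    have hpow : (2:ℤ)^(k+1+1+1) = 4*2^(k+1) := by ring
    rcases hlast with hl | hl | hl
    rotate_left
    · -- top digit zero
      have ⟨ih1, _⟩ := IH (k+1) (by omega) (Fin.init b) (init_digits hd) (init_noadj hna)
      rw [hdec, hl]
      constructor
      · have : (2:ℤ)^(k+1+1) ≤ 2^(k+1+1+1) := by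
          have : (0:ℤ) < 2^(k+1+1) := by positivity
          rw [show (2:ℤ)^(k+1+1+1) = 2*2^(k+1+1) by ring]; omega
        simp only [zero_mul, add_zero]
        omega
      · intro h hb
        rw [hlasteq, hl] at hb; exact absurd hb (by norm_num)
    all_goals {
      -- top digit = -1 or 1 : second-highest digit is zero
      have hadj := hna ⟨k, by omega⟩ (by simp)
      have heq2 : (⟨k+1, by omega⟩ : Fin (k+2)) = Fin.last (k+1) := rfl
      rw [heq2, hl] at hadj
      have hzk : b ⟨k, by omega⟩ = 0 := by
        rcases hadj with h|h
        · exact h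
        · exact absurd h (by norm_num)
      -- decompose init
      have hdec2 := bsdVal_succ (Fin.init b)
      have hinitlast : Fin.init b (Fin.last k) = 0 := by
        simpa [Fin.init, Fin.last] using hzk
      rw [hinitlast, zero_mul, add_zero] at hdec2
      have ⟨ih1, _⟩ := IH k (by omega) (Fin.init (Fin.init b))
        (init_digits (init_digits hd)) (init_noadj (init_noadj hna))
      have habs : |3*bsdVal (Fin.init (Fin.init b))| < 2^(k+1) := by
        rw [abs_mul]
        simpa using ih1
      have hbound := abs_lt.mp habs
      have hval : bsdVal b = bsdVal (Fin.init (Fin.init b)) + b (Fin.last (k+1)) * 2^(k+1) := by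
        rw [hdec, hdec2]
      have hp : (0:ℤ) < 2^(k+1) := by positivity
      constructor
      · rw [show (3:ℤ) * |bsdVal b| = |3 * bsdVal b| by rw [abs_mul]; norm_num]
        rw [abs_lt, hval, hl]
        constructor
        · linarith [hbound.1, hpow]
        · linarith [hbound.2, hpow]
      · intro h hb
        rw [hlasteq] at hb
        rw [hval, hb, show (2:ℤ)^(k+1+1) = 2*2^(k+1) by ring]
        linarith [hbound.1, hp]
    }

lemma neg_digits {k : ℕ} {b : Fin k → ℤ} (h : IsBSDDigits b) :
    IsBSDDigits (fun j => -(b j)) := by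
  intro j
  have := h j
  simp only [Set.mem_insert_iff, Set.mem_singleton_iff] at this ⊢
  omega

lemma neg_noadj {k : ℕ} {b : Fin k → ℤ} (h : NoAdj b) : NoAdj (fun j => -(b j)) := by
  intro j hj
  rcases h j hj with h'|h' <;> simp [h']

lemma bsdVal_neg {k : ℕ} (b : Fin k → ℤ) : bsdVal (fun j => -(b j)) = -bsdVal b := by
  simp [bsdVal, Finset.sum_neg_distrib]

lemma hasNAFLen_bounds {n k : ℕ} (hn : 0 < n) (h : HasNAFLen (n : ℤ) k) :
    2^k < 3*n ∧ 3*n < 2^(k+1) := by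
  obtain ⟨b, ⟨hd, hna, htop⟩, hval⟩ := h
  rcases k with _ | k
  · exfalso
    have h0 : bsdVal b = 0 := by simp [bsdVal]
    rw [h0] at hval
    omega
  · have hmain := naf_main (k+1) b hd hna
    have htopne := htop (by omega)
    have htopval := hd ⟨k + 1 - 1, Nat.sub_lt (by omega) one_pos⟩
    simp only [Set.mem_insert_iff, Set.mem_singleton_iff] at htopval
    have habs : |bsdVal b| = (n:ℤ) := by rw [hval]; exact abs_of_nonneg (by positivity)
    have hupper : 3*n < 2^(k+1+1) := by
      have := hmain.1
      rw [habs] at this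
      exact_mod_cast this
    have hlower : 2^(k+1) < 3*n := by
      rcases htopval with hc | hc | hc
      · exfalso
        have hneg := (naf_main (k+1) (fun j => -(b j)) (neg_digits hd) (neg_noadj hna)).2
          (by omega) (by rw [neg_eq_iff_eq_neg]; exact hc)
        rw [bsdVal_neg, hval] at hneg
        have hp : (0:ℤ) < 2^(k+1) := by positivity
        have hn' : (0:ℤ) < (n:ℤ) := by exact_mod_cast hn
        linarith
      · exact absurd hc htopne
      · have := hmain.2 (by omega) hc
        rw [hval] at this
        exact_mod_cast this
    exact ⟨hlower, hupper⟩

theorem stern_deg_sibling (n k : ℕ) (hn : 0 < n) (h : HasNAFLen (n : ℤ) k) :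
    (sternP (2 ^ k - n)).natDegree = (sternP n).natDegree := by
  obtain ⟨h1, h2⟩ := hasNAFLen_bounds hn h
  exact key k n h1 h2
end

section
/- The NAF of a positive integer n has minimal Hamming weight among all BSD representations of n: if (b_{i-1},...,b_0) is any BSD representation of n with digits in {-1,0,1}, then its number of nonzero digits is at least the number of nonzero digits in the reduced NAF of n. -/
def nafW (m : ℤ) : ℕ :=
  if m = 0 then 0
  else if m % 2 = 0 then nafW (m / 2)
  else if m % 4 = 1 then 1 + nafW ((m - 1) / 2)
  else 1 + nafW ((m + 1) / 2)
termination_by m.natAbs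
decreasing_by all_goals omega

lemma nafW_zero : nafW 0 = 0 := by rw [nafW]; simp

lemma nafW_even (m : ℤ) (h0 : m ≠ 0) (h : m % 2 = 0) : nafW m = nafW (m / 2) := by
  rw [nafW]; simp [h0, h]

lemma nafW_one_mod (m : ℤ) (h : m % 4 = 1) : nafW m = 1 + nafW ((m - 1) / 2) := by
  rw [nafW]
  have h0 : m ≠ 0 := by omega
  have h2 : m % 2 = 1 := by omega
  simp [h0, h2, h]

lemma nafW_three_mod (m : ℤ) (h : m % 4 = 3) : nafW m = 1 + nafW ((m + 1) / 2) := by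
  rw [nafW]
  have h0 : m ≠ 0 := by omega
  have h2 : m % 2 = 1 := by omega
  simp [h0, h2, h]

lemma nafW_odd_succ : ∀ N : ℕ, ∀ x : ℤ, x.natAbs ≤ N → x % 2 = 1 → ∀ d : ℤ,
    (d = 1 ∨ d = -1) → nafW (x + d) ≤ nafW x := by
  intro N
  induction N with
  | zero => intro x hx h d _; omega
  | succ N ih =>
    intro x hx hodd d hd
    have hx4 : x % 4 = 1 ∨ x % 4 = 3 := by omega
    rcases hd with rfl | rfl
    · rcases hx4 with h4 | h4
      · -- x % 4 = 1, d = 1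
        set y : ℤ := (x - 1) / 2 with hy
        have hxy : x = 2 * y + 1 := by omega
        have hyev : y % 2 = 0 := by omega
        have hwx : nafW x = 1 + nafW y := by rw [nafW_one_mod x h4]
        have hx1 : x + 1 = 2 * (y + 1) := by omega
        have hne : (2 : ℤ) * (y + 1) ≠ 0 := by omega
        have hw1 : nafW (x + 1) = nafW (y + 1) := by
          rw [hx1, nafW_even _ hne (by omega)]
          congr 1; omega
        rcases (by omega : y % 4 = 0 ∨ y % 4 = 2) with hy4 | hy4
        · have : nafW (y + 1) = 1 + nafW (y / 2) := by
            rw [nafW_one_mod _ (by omega)]; congr 2; omega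
          have hyy : nafW y = nafW (y / 2) := by
            rcases eq_or_ne y 0 with hy0 | hy0
            · rw [hy0]; norm_num [nafW_zero]
            · exact nafW_even _ hy0 hyev
          omega
        · have h1 : nafW (y + 1) = 1 + nafW (y / 2 + 1) := by
            rw [nafW_three_mod _ (by omega)]; congr 2; omega
          have h2 : nafW (y / 2 + 1) ≤ nafW (y / 2) := by
            apply ih _ (by omega) (by omega) _ (Or.inl rfl)
          have hyy : nafW y = nafW (y / 2) := nafW_even _ (by omega) hyev
          omega
      · -- x % 4 = 3, d = 1 : x+1 ≡ 0 mod 4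
        have hwx : nafW x = 1 + nafW ((x + 1) / 2) := nafW_three_mod x h4
        rcases eq_or_ne (x + 1) 0 with h0 | h0
        · rw [h0, nafW_zero]; omega
        · rw [nafW_even _ h0 (by omega)]; omega
    · rcases hx4 with h4 | h4
      · -- x % 4 = 1, d = -1 : x-1 ≡ 0 mod 4
        have hwx : nafW x = 1 + nafW ((x - 1) / 2) := nafW_one_mod x h4
        rcases eq_or_ne (x - 1) 0 with h0 | h0
        · rw [show x + -1 = x - 1 by ring, h0, nafW_zero]; omega
        · rw [show x + -1 = x - 1 by ring, nafW_even _ h0 (by omega)]; omega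
      · -- x % 4 = 3, d = -1
        set y : ℤ := (x + 1) / 2 with hy
        have hxy : x = 2 * y - 1 := by omega
        have hyev : y % 2 = 0 := by omega
        have hwx : nafW x = 1 + nafW y := by rw [nafW_three_mod x h4]
        have hx1 : x + -1 = 2 * (y - 1) := by omega
        have hne : (2 : ℤ) * (y - 1) ≠ 0 := by omega
        have hw1 : nafW (x + -1) = nafW (y - 1) := by
          rw [hx1, nafW_even _ hne (by omega)]
          congr 1; omega
        rcases (by omega : y % 4 = 0 ∨ y % 4 = 2) with hy4 | hy4
        · have : nafW (y - 1) = 1 + nafW (y / 2) := by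
            rw [nafW_three_mod _ (by omega)]; congr 2; omega
          have hyy : nafW y = nafW (y / 2) := by
            rcases eq_or_ne y 0 with hy0 | hy0
            · rw [hy0]; norm_num [nafW_zero]
            · exact nafW_even _ hy0 hyev
          omega
        · have h1 : nafW (y - 1) = 1 + nafW (y / 2 - 1) := by
            rw [nafW_one_mod _ (by omega)]; congr 2; omega
          have h2 : nafW (y / 2 - 1) ≤ nafW (y / 2) := by
            have := ih (y / 2) (by omega) (by omega) (-1) (Or.inr rfl)
            rwa [show y / 2 + -1 = y / 2 - 1 by ring] at this
          have hyy : nafW y = nafW (y / 2) := nafW_even _ (by omega) hyev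
          omega

lemma nafW_digit_step (m e : ℤ) (he : e = -1 ∨ e = 0 ∨ e = 1) :
    nafW (e + 2 * m) ≤ (if e = 0 then 0 else 1) + nafW m := by
  have Q := fun (x : ℤ) hodd d hd => nafW_odd_succ x.natAbs x le_rfl hodd d hd
  rcases he with rfl | rfl | rfl
  · simp only [if_neg (by norm_num : (-1 : ℤ) ≠ 0)]
    rcases (by omega : m % 2 = 0 ∨ m % 2 = 1) with hm | hm
    · rw [nafW_three_mod _ (by omega)]
      have : (-1 + 2 * m + 1) / 2 = m := by omega
      rw [this]
    · rw [nafW_one_mod _ (by omega)]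
      have : (-1 + 2 * m - 1) / 2 = m - 1 := by omega
      rw [this]
      have := Q m hm (-1) (Or.inr rfl)
      simp only [show m + -1 = m - 1 by ring] at this
      omega
  · rw [show (0 : ℤ) + 2 * m = 2 * m by ring]
    simp only [if_pos rfl, zero_add]
    rcases eq_or_ne m 0 with rfl | hm
    · simp [nafW_zero]
    · rw [nafW_even _ (by omega) (by omega)]
      have : (2 * m) / 2 = m := by omega
      rw [this]
      simp
  · simp only [if_neg (by norm_num : (1 : ℤ) ≠ 0)]
    rcases (by omega : m % 2 = 0 ∨ m % 2 = 1) with hm | hm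
    · rw [nafW_one_mod _ (by omega)]
      have : (1 + 2 * m - 1) / 2 = m := by omega
      rw [this]
    · rw [nafW_three_mod _ (by omega)]
      have : (1 + 2 * m + 1) / 2 = m + 1 := by omega
      rw [this]
      have := Q m hm 1 (Or.inl rfl)
      omega

lemma bsdVal_succ_s10 {i : ℕ} (b : Fin (i + 1) → ℤ) :
    bsdVal b = b 0 + 2 * bsdVal (fun j => b j.succ) := by
  unfold bsdVal
  rw [Fin.sum_univ_succ, Finset.mul_sum]
  simp only [Fin.val_zero, pow_zero, mul_one, Fin.val_succ]
  congr 1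
  apply Finset.sum_congr rfl
  intro j _
  ring

lemma weight_le (i : ℕ) (b : Fin i → ℤ) (hb : IsBSDDigits b) :
    nafW (bsdVal b) ≤ ∑ j, if b j = 0 then 0 else 1 := by
  induction i with
  | zero => simp [bsdVal, nafW_zero]
  | succ i ih =>
    rw [bsdVal_succ_s10, Fin.sum_univ_succ]
    have h0 := hb 0
    simp only [Set.mem_insert_iff, Set.mem_singleton_iff] at h0
    calc nafW (b 0 + 2 * bsdVal fun j => b j.succ)
        ≤ (if b 0 = 0 then 0 else 1) + nafW (bsdVal fun j => b j.succ) :=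
          nafW_digit_step _ _ (by tauto)
      _ ≤ (if b 0 = 0 then 0 else 1) + ∑ j : Fin i, if b j.succ = 0 then 0 else 1 := by
          have h := ih (fun j => b j.succ) (fun j => hb j.succ)
          omega

lemma tail_naf {k : ℕ} (c : Fin (k + 1) → ℤ) (hc : IsReducedNAF c) (hk : 0 < k) :
    IsReducedNAF (fun j => c j.succ) := by
  obtain ⟨hd, hadj, hlead⟩ := hc
  refine ⟨fun j => hd j.succ, ?_, ?_⟩
  · intro j h
    have h' : ((j.succ : Fin (k+1)) : ℕ) + 1 < k + 1 := by simp [Fin.val_succ]; omega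
    have := hadj j.succ h'
    rcases this with h1 | h1
    · exact Or.inl h1
    · right
      convert h1 using 2
      exact Fin.ext (by simp [Fin.val_succ])
  · intro h
    have := hlead (by omega : 0 < k + 1)
    simp only
    convert this using 2
    ext
    simp only [Fin.val_succ]
    omega

lemma naf_val_ne_zero : ∀ k : ℕ, 0 < k → ∀ c : Fin k → ℤ, IsReducedNAF c → bsdVal c ≠ 0 := by
  intro k
  induction k with
  | zero => omega
  | succ k ih =>
    intro _ c hc
    rw [bsdVal_succ_s10]
    rcases Nat.eq_zero_or_pos k with rfl | hk
    · have hl := hc.2.2 (by omega)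
      have : c ⟨0, by omega⟩ ≠ 0 := hl
      have h0 : c 0 ≠ 0 := by convert this using 2; exact Fin.ext (by simp)
      have : bsdVal (fun j : Fin 0 => c j.succ) = 0 := by simp [bsdVal]
      rw [this]
      simpa using h0
    · have hm' := ih hk (fun j => c j.succ) (tail_naf c hc hk)
      have h0 := hc.1 0
      simp only [Set.mem_insert_iff, Set.mem_singleton_iff] at h0
      rcases h0 with h0 | h0 | h0 <;> rw [h0] <;> omega

lemma naf_weight_ge : ∀ k : ℕ, ∀ c : Fin k → ℤ, IsReducedNAF c →
    (∑ j, if c j = 0 then 0 else 1) ≤ nafW (bsdVal c) := by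
  intro k
  induction k with
  | zero => simp
  | succ k ih =>
    intro c hc
    rw [bsdVal_succ_s10, Fin.sum_univ_succ]
    rcases Nat.eq_zero_or_pos k with rfl | hk
    · -- length 1
      have hl : c ⟨0, by omega⟩ ≠ 0 := hc.2.2 (by omega)
      have h0 : c 0 ≠ 0 := by convert hl using 2; exact Fin.ext (by simp)
      have hmem := hc.1 0
      simp only [Set.mem_insert_iff, Set.mem_singleton_iff] at hmem
      have hv : bsdVal (fun j : Fin 0 => c j.succ) = 0 := by simp [bsdVal]
      rw [hv]
      simp only [Finset.univ_eq_empty, Finset.sum_empty, if_neg h0]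
      rcases hmem with h | h | h
      · rw [h, show (-1 : ℤ) + 2 * 0 = -1 by ring, nafW_three_mod _ (by decide)]
        norm_num
      · exact absurd h h0
      · rw [h, show (1 : ℤ) + 2 * 0 = 1 by ring, nafW_one_mod _ (by decide)]
        norm_num
    · rcases (show ∃ k', k = k' + 1 from ⟨k - 1, by omega⟩) with ⟨k', rfl⟩
      have hnaf' : IsReducedNAF (fun j : Fin (k' + 1) => c j.succ) :=
        tail_naf c hc (by omega)
      have hIH : (∑ i : Fin (k' + 1), if c i.succ = 0 then 0 else 1)
          ≤ nafW (bsdVal fun j : Fin (k' + 1) => c j.succ) := ih _ hnaf'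
      have hmem := hc.1 0
      simp only [Set.mem_insert_iff, Set.mem_singleton_iff] at hmem
      have hadj : ∀ h0 : c 0 ≠ 0, c (Fin.succ (0 : Fin (k' + 1))) = 0 := by
        intro h0
        have hlt : ((0 : Fin (k' + 2)) : ℕ) + 1 < k' + 2 := by simp
        have := hc.2.1 0 hlt
        rcases this with h | h
        · exact absurd h h0
        · convert h using 2
          exact Fin.ext (by simp)
      have hpar : c (Fin.succ (0 : Fin (k' + 1))) = 0 →
          (bsdVal fun j : Fin (k' + 1) => c j.succ) % 2 = 0 := by
        intro hz
        rw [bsdVal_succ_s10]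
        rw [hz]
        omega
      rcases hmem with h0 | h0 | h0
      · have hz := hadj (by rw [h0]; norm_num)
        have hev := hpar hz
        rw [h0, nafW_three_mod _ (by omega)]
        have he : (-1 + 2 * (bsdVal fun j : Fin (k' + 1) => c j.succ) + 1) / 2
            = bsdVal fun j : Fin (k' + 1) => c j.succ := by omega
        rw [he]
        norm_num
        omega
      · have hm0 : (bsdVal fun j : Fin (k' + 1) => c j.succ) ≠ 0 :=
          naf_val_ne_zero _ (by omega) _ hnaf'
        rw [h0, show (0 : ℤ) + 2 * (bsdVal fun j : Fin (k' + 1) => c j.succ)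
            = 2 * (bsdVal fun j : Fin (k' + 1) => c j.succ) by ring,
          nafW_even _ (by omega) (by omega)]
        have he : (2 * (bsdVal fun j : Fin (k' + 1) => c j.succ)) / 2
            = bsdVal fun j : Fin (k' + 1) => c j.succ := by omega
        rw [he]
        norm_num
        omega
      · have hz := hadj (by rw [h0]; norm_num)
        have hev := hpar hz
        rw [h0, nafW_one_mod _ (by omega)]
        have he : (1 + 2 * (bsdVal fun j : Fin (k' + 1) => c j.succ) - 1) / 2
            = bsdVal fun j : Fin (k' + 1) => c j.succ := by omega
        rw [he]
        norm_num
        omega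

lemma ncard_weight {i : ℕ} (b : Fin i → ℤ) :
    {j | b j ≠ 0}.ncard = ∑ j, if b j = 0 then 0 else 1 := by
  have h : {j | b j ≠ 0} = ↑(Finset.univ.filter fun j => b j ≠ 0) := by
    ext j; simp
  rw [h, Set.ncard_coe_finset, Finset.card_filter]
  apply Finset.sum_congr rfl
  intro j _
  by_cases hj : b j = 0 <;> simp [hj]

theorem naf_minimal_weight (n i k : ℕ) (hn : 0 < n)
    (b : Fin i → ℤ) (hb : IsBSDDigits b) (hbv : bsdVal b = (n : ℤ))
    (c : Fin k → ℤ) (hc : IsReducedNAF c) (hcv : bsdVal c = (n : ℤ)) :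
    {j | c j ≠ 0}.ncard ≤ {j | b j ≠ 0}.ncard := by
  rw [ncard_weight, ncard_weight]
  have h1 := naf_weight_ge k c hc
  have h2 := weight_le i b hb
  rw [hcv] at h1
  rw [hbv] at h2
  omega
end

section
/- For k ≥ 3 and 0 ≤ v < |I_{k-2}|, writing c_k = 2^{k-1} + a_{k-2}, the Stern polynomials satisfy deg(B_{c_k + v}) = deg(B_{2^{k-2} - (a_{k-2} + v)}) + 1 and lc(B_{c_k + v}) = lc(B_{2^{k-2} - (a_{k-2} + v)}) + lc(B_{a_{k-2} + v}). -/
namespace SternAux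
open Polynomial

open Polynomial

lemma sternP_two_mul (n : ℕ) : sternP (2 * n) = X * sternP n := by
  match n with
  | 0 => simp [sternP]
  | (n + 1) =>
    have h : 2 * (n + 1) = (2 * n) + 2 := by ring
    rw [h, sternP]
    simp [Nat.mul_mod_right, Nat.mul_div_cancel_left]

lemma sternP_two_mul_add_one (n : ℕ) : sternP (2 * n + 1) = sternP n + sternP (n + 1) := by
  match n with
  | 0 => simp [sternP]
  | (n + 1) =>
    have h : 2 * (n + 1) + 1 = (2 * n + 1) + 2 := by ring
    rw [h, sternP]
    have h2 : (2 * n + 1 + 2) % 2 = 1 := by omega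
    have h3 : (2 * n + 1) / 2 = n := by omega
    rw [h2]
    norm_num [h3]

lemma sternP_eval_one_pos : ∀ n, 1 ≤ n → 0 < (sternP n).eval 1 := by
  intro n
  induction n using Nat.strong_induction_on with
  | _ n ih =>
    intro hn
    rcases Nat.even_or_odd n with ⟨t, ht⟩ | ⟨t, ht⟩
    · have ht1 : 1 ≤ t := by omega
      have : n = 2 * t := by omega
      rw [this, sternP_two_mul]
      simpa using ih t (by omega) ht1
    · rcases Nat.eq_or_lt_of_le hn with h1 | h1
      · simp [← h1, sternP]
      · have ht1 : 1 ≤ t := by omega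
        rw [ht, sternP_two_mul_add_one]
        have := ih t (by omega) ht1
        simp only [eval_add]
        positivity

lemma sternP_ne_zero {n : ℕ} (h : 1 ≤ n) : sternP n ≠ 0 := by
  intro h0
  have := sternP_eval_one_pos n h
  rw [h0] at this
  simp at this

noncomputable def DD (n : ℕ) : ℕ := (sternP n).natDegree
noncomputable def LL (n : ℕ) : ℕ := (sternP n).leadingCoeff

lemma add_dl_right {p q : Polynomial ℕ} (hq : q ≠ 0) (h : p.natDegree < q.natDegree) :
    (p + q).natDegree = q.natDegree ∧ (p + q).leadingCoeff = q.leadingCoeff := by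
  have hcoeff : (p + q).coeff q.natDegree = q.leadingCoeff := by
    rw [coeff_add, coeff_eq_zero_of_natDegree_lt h, zero_add, coeff_natDegree]
  have hne : (p + q).coeff q.natDegree ≠ 0 := by
    rw [hcoeff]; exact leadingCoeff_ne_zero.mpr hq
  have hd : (p + q).natDegree = q.natDegree :=
    le_antisymm (le_trans (natDegree_add_le p q) (max_le h.le le_rfl))
      (le_natDegree_of_ne_zero hne)
  exact ⟨hd, by rw [show (p + q).leadingCoeff = (p + q).coeff ((p + q).natDegree) from rfl, hd,
    hcoeff]⟩

lemma add_dl_eq {p q : Polynomial ℕ} (hq : q ≠ 0) (h : p.natDegree = q.natDegree) :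
    (p + q).natDegree = q.natDegree ∧
      (p + q).leadingCoeff = p.leadingCoeff + q.leadingCoeff := by
  have hcoeff : (p + q).coeff q.natDegree = p.leadingCoeff + q.leadingCoeff := by
    rw [coeff_add, ← h, coeff_natDegree, h, coeff_natDegree]
  have hne : (p + q).coeff q.natDegree ≠ 0 := by
    rw [hcoeff]
    have := leadingCoeff_ne_zero.mpr hq
    omega
  have hd : (p + q).natDegree = q.natDegree :=
    le_antisymm (le_trans (natDegree_add_le p q) (max_le h.le le_rfl))
      (le_natDegree_of_ne_zero hne)
  exact ⟨hd, by rw [show (p + q).leadingCoeff = (p + q).coeff ((p + q).natDegree) from rfl, hd,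
    hcoeff]⟩

lemma DL_even {t : ℕ} (ht : 1 ≤ t) : DD (2 * t) = DD t + 1 ∧ LL (2 * t) = LL t := by
  unfold DD LL
  rw [sternP_two_mul]
  constructor
  · rw [natDegree_mul X_ne_zero (sternP_ne_zero ht), natDegree_X]; omega
  · rw [leadingCoeff_mul, leadingCoeff_X, one_mul]

lemma DL_odd_lt {t : ℕ} (h : DD t < DD (t + 1)) :
    DD (2 * t + 1) = DD (t + 1) ∧ LL (2 * t + 1) = LL (t + 1) := by
  unfold DD LL
  rw [sternP_two_mul_add_one]
  exact add_dl_right (sternP_ne_zero (by omega)) h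

lemma DL_odd_gt {t : ℕ} (ht : 1 ≤ t) (h : DD (t + 1) < DD t) :
    DD (2 * t + 1) = DD t ∧ LL (2 * t + 1) = LL t := by
  unfold DD LL
  rw [sternP_two_mul_add_one, add_comm]
  exact add_dl_right (sternP_ne_zero ht) h

lemma DL_odd_eq {t : ℕ} (ht : 1 ≤ t) (h : DD t = DD (t + 1)) :
    DD (2 * t + 1) = DD t ∧ LL (2 * t + 1) = LL t + LL (t + 1) := by
  unfold DD LL
  rw [sternP_two_mul_add_one]
  have := add_dl_eq (sternP_ne_zero (show (1:ℕ) ≤ t + 1 by omega)) h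
  exact ⟨this.1.trans h.symm, this.2⟩

lemma DD_odd_max {t : ℕ} (ht : 1 ≤ t) : DD (2 * t + 1) = max (DD t) (DD (t + 1)) := by
  rcases lt_trichotomy (DD t) (DD (t + 1)) with h | h | h
  · rw [(DL_odd_lt h).1, max_eq_right h.le]
  · rw [(DL_odd_eq ht h).1, h, max_self]
  · rw [(DL_odd_gt ht h).1, max_eq_left h.le]

lemma DD_one : DD 1 = 0 := by unfold DD; simp [sternP]
lemma LL_one : LL 1 = 1 := by unfold LL; simp [sternP]
lemma DD_two : DD 2 = 1 := by
  have := DL_even (t := 1) le_rfl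
  rw [DD_one] at this; exact this.1
lemma LL_two : LL 2 = 1 := by
  have := DL_even (t := 1) le_rfl
  rw [LL_one] at this; exact this.2
lemma DD_three : DD 3 = 1 := by
  have := DL_odd_lt (t := 1) (by rw [DD_one, DD_two]; omega)
  rw [DD_two] at this; exact this.1
lemma LL_three : LL 3 = 1 := by
  have := DL_odd_lt (t := 1) (by rw [DD_one, DD_two]; omega)
  rw [LL_two] at this; exact this.2
lemma DD_five : DD 5 = 1 := by
  have := DL_odd_eq (t := 2) (by omega) (by rw [DD_two, DD_three])
  rw [DD_two] at this; exact this.1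
lemma LL_five : LL 5 = 2 := by
  have := DL_odd_eq (t := 2) (by omega) (by rw [DD_two, DD_three])
  rw [LL_two, LL_three] at this; exact this.2




lemma aseq_add_three (k : ℕ) : aseq (k + 3) = 2 ^ (k + 1) + aseq (k + 1) := rfl

lemma aseq_add_two {k : ℕ} (hk : 1 ≤ k) : aseq (k + 2) = 2 ^ k + aseq k := by
  match k, hk with
  | (j + 1), _ => exact aseq_add_three j

lemma aseq_facts : ∀ k, 1 ≤ k → aseq k + aseq (k + 1) = 2 ^ k + 1 ∧
    aseq k < aseq (k + 1) ∧ 2 * aseq k ≤ aseq (k + 1) + 1 ∧ aseq (k + 1) ≤ 2 * aseq k := by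
  intro k
  induction k using Nat.strong_induction_on with
  | _ k ih =>
    intro hk
    match k, hk with
    | 1, _ => norm_num [aseq]
    | 2, _ => norm_num [aseq, aseq_add_three]
    | (j + 3), _ =>
      have h1 := ih (j + 1) (by omega) (by omega)
      have h2 := ih (j + 2) (by omega) (by omega)
      have e1 : aseq (j + 3) = 2 ^ (j + 1) + aseq (j + 1) := aseq_add_three j
      have e2 : aseq (j + 3 + 1) = 2 ^ (j + 2) + aseq (j + 2) := aseq_add_three (j + 1)
      have p1 : (2:ℕ) ^ (j + 2) = 2 * 2 ^ (j + 1) := by ring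
      have p2 : (2:ℕ) ^ (j + 3) = 4 * 2 ^ (j + 1) := by ring
      omega

lemma aseq_sum {k : ℕ} (hk : 1 ≤ k) : aseq k + aseq (k + 1) = 2 ^ k + 1 :=
  (aseq_facts k hk).1

lemma aseq_lt {k : ℕ} (hk : 1 ≤ k) : aseq k < aseq (k + 1) := (aseq_facts k hk).2.1

lemma aseq_lb {k : ℕ} (hk : 1 ≤ k) : 2 * aseq k ≤ aseq (k + 1) + 1 := (aseq_facts k hk).2.2.1

lemma aseq_ub {k : ℕ} (hk : 1 ≤ k) : aseq (k + 1) ≤ 2 * aseq k := (aseq_facts k hk).2.2.2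

lemma aseq_pos {k : ℕ} (hk : 1 ≤ k) : 1 ≤ aseq k := by
  induction k with
  | zero => omega
  | succ n ihn =>
    rcases Nat.eq_or_lt_of_le hk with h | h
    · simp [← h, aseq]
    · have h1 : 1 ≤ n := by omega
      have := aseq_lt h1
      have := ihn h1
      omega

lemma aseq_two {k : ℕ} (hk : 2 ≤ k) : 2 ≤ aseq k := by
  induction k with
  | zero => omega
  | succ n ihn =>
    rcases Nat.eq_or_lt_of_le hk with h | h
    · have hn : n + 1 = 2 := h.symm
      rw [hn]; norm_num [aseq]
    · have h1 : 2 ≤ n := by omega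
      have := aseq_lt (show 1 ≤ n by omega)
      have := ihn h1
      omega

lemma aseq_le_pow {k : ℕ} (hk : 1 ≤ k) : aseq (k + 1) ≤ 2 ^ k := by
  have := aseq_sum hk
  have := aseq_pos hk
  omega

/-- `a (2j+2) = 2 * a (2j+1)` -/
lemma aseq_even : ∀ j : ℕ, aseq (2 * j + 2) = 2 * aseq (2 * j + 1) := by
  intro j
  induction j with
  | zero => norm_num [aseq]
  | succ n ihn =>
    have e1 : 2 * (n + 1) + 2 = (2 * n + 1) + 3 := by ring
    have e2 : 2 * (n + 1) + 1 = (2 * n) + 3 := by ring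
    rw [e1, e2, aseq_add_three, aseq_add_three]
    have : 2 * n + 1 + 1 = 2 * n + 2 := by ring
    rw [this, ihn]
    ring

/-- `a (2j+3) + 1 = 2 * a (2j+2)` -/
lemma aseq_odd : ∀ j : ℕ, aseq (2 * j + 3) + 1 = 2 * aseq (2 * j + 2) := by
  intro j
  induction j with
  | zero => norm_num [aseq, aseq_add_three]
  | succ n ihn =>
    rw [show 2 * (n + 1) + 3 = (2 * n + 2) + 3 by ring,
      show 2 * (n + 1) + 2 = (2 * n + 1) + 3 by ring, aseq_add_three (2 * n + 2),
      aseq_add_three (2 * n + 1)]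
    simp only [show 2 * n + 2 + 1 = 2 * n + 3 from by omega,
      show 2 * n + 1 + 1 = 2 * n + 2 from by omega]
    have p1 : (2:ℕ) ^ (2 * n + 3) = 2 * 2 ^ (2 * n + 2) := by ring
    omega

/-- parity relation in usable form: for `k ≥ 2`,
if `k` even then `a k = 2 a (k-1)`, else `a k + 1 = 2 a (k-1)`. -/
lemma aseq_parity {k : ℕ} (hk : 2 ≤ k) :
    (k % 2 = 0 → aseq k = 2 * aseq (k - 1)) ∧
    (k % 2 = 1 → aseq k + 1 = 2 * aseq (k - 1)) := by
  constructor
  · intro h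
    obtain ⟨j, hj⟩ : ∃ j, k = 2 * j + 2 := ⟨(k - 2) / 2, by omega⟩
    subst hj
    have := aseq_even j
    have : 2 * j + 2 - 1 = 2 * j + 1 := by omega
    rw [this]
    exact aseq_even j
  · intro h
    obtain ⟨j, hj⟩ : ∃ j, k = 2 * j + 3 := ⟨(k - 3) / 2, by omega⟩
    subst hj
    have : 2 * j + 3 - 1 = 2 * j + 2 := by omega
    rw [this]
    exact aseq_odd j



open Polynomial

/-- Values at `a k` and `a k - 1`. -/
lemma S12 : ∀ k, 1 ≤ k →
    (DD (aseq k) = k / 2 ∧ LL (aseq k) = 1) ∧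
    (2 ≤ k → DD (aseq k - 1) = (k - 1) / 2 ∧ LL (aseq k - 1) = k / 2) := by
  intro k
  induction k using Nat.strong_induction_on with
  | _ k ih =>
    intro hk
    match k, hk with
    | 1, _ =>
      refine ⟨⟨?_, ?_⟩, by omega⟩
      · show DD 1 = 0; exact DD_one
      · show LL 1 = 1; exact LL_one
    | 2, _ =>
      refine ⟨⟨DD_two, LL_two⟩, fun _ => ⟨?_, ?_⟩⟩
      · show DD 1 = 0; exact DD_one
      · show LL 1 = 1; exact LL_one
    | (j + 3), _ =>
      have hk3 : 3 ≤ j + 3 := by omega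
      set k := j + 3 with hkdef
      have hIH := ih (k - 1) (by omega) (by omega)
      have h1 : 1 ≤ aseq (k - 1) := aseq_pos (by omega)
      have h2 : 2 ≤ aseq (k - 1) := aseq_two (by omega)
      obtain ⟨⟨dA, lA⟩, hS2⟩ := hIH
      obtain ⟨dB, lB⟩ := hS2 (by omega)
      rw [show k - 1 - 1 = k - 2 by omega] at dB
      rcases Nat.even_or_odd k with he | ho
      · have hmod : k % 2 = 0 := Nat.even_iff.mp he
        have hpar : aseq k = 2 * aseq (k - 1) := (aseq_parity (by omega)).1 hmod
        have hev := DL_even h1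
        have hd1 : DD (aseq k) = k / 2 := by rw [hpar, hev.1, dA]; omega
        have hl1 : LL (aseq k) = 1 := by rw [hpar, hev.2, lA]
        have hm1 : aseq k - 1 = 2 * (aseq (k - 1) - 1) + 1 := by omega
        have htie : DD (aseq (k - 1) - 1) = DD (aseq (k - 1) - 1 + 1) := by
          rw [show aseq (k - 1) - 1 + 1 = aseq (k - 1) by omega, dA, dB]
          omega
        have hodd := DL_odd_eq (t := aseq (k - 1) - 1) (by omega) htie
        rw [show aseq (k - 1) - 1 + 1 = aseq (k - 1) by omega] at hodd
        refine ⟨⟨hd1, hl1⟩, fun _ => ⟨?_, ?_⟩⟩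
        · rw [hm1, hodd.1, dB]; omega
        · rw [hm1, hodd.2, lB, lA]; omega
      · have hmod : k % 2 = 1 := Nat.odd_iff.mp ho
        have hpar : aseq k + 1 = 2 * aseq (k - 1) := (aseq_parity (by omega)).2 hmod
        have hm0 : aseq k = 2 * (aseq (k - 1) - 1) + 1 := by omega
        have hlt : DD (aseq (k - 1) - 1) < DD (aseq (k - 1) - 1 + 1) := by
          rw [show aseq (k - 1) - 1 + 1 = aseq (k - 1) by omega, dA, dB]
          omega
        have hodd := DL_odd_lt hlt
        rw [show aseq (k - 1) - 1 + 1 = aseq (k - 1) by omega] at hodd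
        have hm1 : aseq k - 1 = 2 * (aseq (k - 1) - 1) := by omega
        have hev := DL_even (t := aseq (k - 1) - 1) (by omega)
        refine ⟨⟨?_, ?_⟩, fun _ => ⟨?_, ?_⟩⟩
        · rw [hm0, hodd.1, dA]; omega
        · rw [hm0, hodd.2, lA]
        · rw [hm1, hev.1, dB]; omega
        · rw [hm1, hev.2, lB]; omega

lemma S1 {k : ℕ} (hk : 1 ≤ k) : DD (aseq k) = k / 2 ∧ LL (aseq k) = 1 := (S12 k hk).1

lemma S2 {k : ℕ} (hk : 2 ≤ k) :
    DD (aseq k - 1) = (k - 1) / 2 ∧ LL (aseq k - 1) = k / 2 :=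
  (S12 k (by omega)).2 hk

/-- Values at `2^m + a (m-1) - 1` and `2^m + a (m-1)`. -/
lemma S45 : ∀ m, 2 ≤ m →
    (DD (2 ^ m + aseq (m - 1) - 1) = m / 2 + 1 ∧ LL (2 ^ m + aseq (m - 1) - 1) = 1) ∧
    (DD (2 ^ m + aseq (m - 1)) = (m + 1) / 2 ∧ LL (2 ^ m + aseq (m - 1)) = m / 2 + 1) := by
  intro m
  induction m using Nat.strong_induction_on with
  | _ m ih =>
    intro hm
    match m, hm with
    | 2, _ =>
      constructor
      · constructor
        · show DD 4 = 2
          have := DL_even (t := 2) (by omega)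
          rw [DD_two] at this
          exact (show (4:ℕ) = 2 * 2 from rfl) ▸ this.1
        · show LL 4 = 1
          have := DL_even (t := 2) (by omega)
          rw [LL_two] at this
          exact (show (4:ℕ) = 2 * 2 from rfl) ▸ this.2
      · exact ⟨DD_five, LL_five⟩
    | (j + 3), _ =>
      have hm3 : 3 ≤ j + 3 := by omega
      set m := j + 3 with hmdef
      have hIH := ih (m - 1) (by omega) (by omega)
      obtain ⟨⟨d4, l4⟩, d5, l5⟩ := hIH
      rw [show m - 1 - 1 = m - 2 by omega] at d4 l4 d5 l5
      have hp : 1 ≤ aseq (m - 2) := aseq_pos (by omega)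
      have hpow : (2:ℕ) ^ m = 2 * 2 ^ (m - 1) := by
        conv_lhs => rw [show m = (m - 1) + 1 by omega]
        rw [pow_succ]; ring
      have hx0 : 1 ≤ 2 ^ (m - 1) := Nat.one_le_two_pow
      have hx1 : 1 ≤ 2 ^ (m - 1) + aseq (m - 2) - 1 := by omega
      rcases Nat.even_or_odd m with he | ho
      · have hmod : m % 2 = 0 := Nat.even_iff.mp he
        have hpar : aseq (m - 1) + 1 = 2 * aseq (m - 2) := by
          have := (aseq_parity (k := m - 1) (by omega)).2 (by omega)
          rw [show m - 1 - 1 = m - 2 by omega] at this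
          exact this
        have e4 : 2 ^ m + aseq (m - 1) - 1 = 2 * (2 ^ (m - 1) + aseq (m - 2) - 1) := by omega
        have hev := DL_even hx1
        have e5 : 2 ^ m + aseq (m - 1) = 2 * (2 ^ (m - 1) + aseq (m - 2) - 1) + 1 := by omega
        have htie : DD (2 ^ (m - 1) + aseq (m - 2) - 1)
            = DD (2 ^ (m - 1) + aseq (m - 2) - 1 + 1) := by
          rw [show 2 ^ (m - 1) + aseq (m - 2) - 1 + 1 = 2 ^ (m - 1) + aseq (m - 2) by omega,
            d4, d5]
          omega
        have hodd := DL_odd_eq hx1 htie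
        rw [show 2 ^ (m - 1) + aseq (m - 2) - 1 + 1 = 2 ^ (m - 1) + aseq (m - 2) by omega]
          at hodd
        refine ⟨⟨?_, ?_⟩, ?_, ?_⟩
        · rw [e4, hev.1, d4]; omega
        · rw [e4, hev.2, l4]
        · rw [e5, hodd.1, d4]; omega
        · rw [e5, hodd.2, l4, l5]; omega
      · have hmod : m % 2 = 1 := Nat.odd_iff.mp ho
        have hpar : aseq (m - 1) = 2 * aseq (m - 2) := by
          have := (aseq_parity (k := m - 1) (by omega)).1 (by omega)
          rw [show m - 1 - 1 = m - 2 by omega] at this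
          exact this
        have e4 : 2 ^ m + aseq (m - 1) - 1 = 2 * (2 ^ (m - 1) + aseq (m - 2) - 1) + 1 := by
          omega
        have hgt : DD (2 ^ (m - 1) + aseq (m - 2) - 1 + 1)
            < DD (2 ^ (m - 1) + aseq (m - 2) - 1) := by
          rw [show 2 ^ (m - 1) + aseq (m - 2) - 1 + 1 = 2 ^ (m - 1) + aseq (m - 2) by omega,
            d4, d5]
          omega
        have hodd := DL_odd_gt hx1 hgt
        have e5 : 2 ^ m + aseq (m - 1) = 2 * (2 ^ (m - 1) + aseq (m - 2)) := by omega
        have hev := DL_even (t := 2 ^ (m - 1) + aseq (m - 2)) (by omega)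
        refine ⟨⟨?_, ?_⟩, ?_, ?_⟩
        · rw [e4, hodd.1, d4]; omega
        · rw [e4, hodd.2, l4]
        · rw [e5, hev.1, d5]; omega
        · rw [e5, hev.2, l5]; omega




abbrev NonAdj {k : ℕ} (b : Fin k → ℤ) : Prop :=
  ∀ j : Fin k, ∀ h : (j : ℕ) + 1 < k, b j = 0 ∨ b ⟨(j : ℕ) + 1, h⟩ = 0

lemma bsdVal_succ {n : ℕ} (b : Fin (n + 1) → ℤ) :
    bsdVal b = bsdVal (Fin.init b) + b (Fin.last n) * 2 ^ n := by
  unfold bsdVal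
  rw [Fin.sum_univ_castSucc]
  simp [Fin.init]

lemma digits_init {n : ℕ} {b : Fin (n + 1) → ℤ} (hb : IsBSDDigits b) :
    IsBSDDigits (Fin.init b) := fun i => hb _

lemma nonadj_init {n : ℕ} {b : Fin (n + 1) → ℤ} (hb : NonAdj b) : NonAdj (Fin.init b) := by
  intro i h
  have h' : (i : ℕ) + 1 < n + 1 := by omega
  rcases hb (Fin.castSucc i) (by simpa using h') with h0 | h0
  · left; exact h0
  · right
    have : Fin.castSucc (⟨(i : ℕ) + 1, h⟩ : Fin n) = ⟨(i : ℕ) + 1, h'⟩ := by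
      apply Fin.ext; simp
    rw [show (Fin.init b) (⟨(i : ℕ) + 1, h⟩ : Fin n) = b (Fin.castSucc ⟨(i : ℕ) + 1, h⟩)
      from rfl, this]
    exact h0

lemma digits_neg {n : ℕ} {b : Fin n → ℤ} (hb : IsBSDDigits b) :
    IsBSDDigits (fun i => -b i) := by
  intro i
  have := hb i
  simp only [Set.mem_insert_iff, Set.mem_singleton_iff] at this ⊢
  omega

lemma nonadj_neg {n : ℕ} {b : Fin n → ℤ} (hb : NonAdj b) : NonAdj (fun i => -b i) := by
  intro i h
  rcases hb i h with h0 | h0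
  · left; simp [h0]
  · right; simp [h0]

lemma bsdVal_neg {n : ℕ} (b : Fin n → ℤ) : bsdVal (fun i => -b i) = -bsdVal b := by
  unfold bsdVal
  rw [← Finset.sum_neg_distrib]
  congr 1; ext i; ring

/-- Upper bound: any nonadjacent BSD string of length `j` has value `≤ a (j+1) - 1`. -/
lemma bsd_upper : ∀ j, ∀ b : Fin j → ℤ, IsBSDDigits b → NonAdj b →
    bsdVal b ≤ (aseq (j + 1) : ℤ) - 1 := by
  intro j
  induction j using Nat.strong_induction_on with
  | _ j ih =>
    intro b hb hnon
    match j with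
    | 0 =>
      have : bsdVal b = 0 := by simp [bsdVal]
      rw [this]; norm_num [aseq]
    | (n + 1) =>
      have hsplit := bsdVal_succ b
      have hc := hb (Fin.last n)
      simp only [Set.mem_insert_iff, Set.mem_singleton_iff] at hc
      have hb' := digits_init hb
      have hnon' := nonadj_init hnon
      have hIH := ih n (by omega) (Fin.init b) hb' hnon'
      have hmono : (aseq (n + 1) : ℤ) ≤ (aseq (n + 1 + 1) : ℤ) := by
        exact_mod_cast (aseq_lt (k := n + 1) (by omega)).le
      have hpw : (0:ℤ) < 2 ^ n := by positivity
      rcases hc with hc | hc | hc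
      · have hneg : b (Fin.last n) * 2 ^ n ≤ 0 := by rw [hc]; linarith
        rw [hsplit]; linarith
      · have hz : b (Fin.last n) * 2 ^ n = 0 := by rw [hc]; ring
        rw [hsplit, hz]; linarith
      · -- top digit 1
        match n with
        | 0 =>
          have hb0 : bsdVal (Fin.init b) = 0 := by simp [bsdVal]
          rw [hsplit, hb0, hc]
          norm_num [aseq, aseq_add_three]
        | (k + 1) =>
          -- adjacent digit is zero
          have hadj : b ⟨k, by omega⟩ = 0 := by
            rcases hnon ⟨k, by omega⟩ (by simp) with h0 | h0
            · exact h0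
            · exfalso
              have : (⟨k + 1, by omega⟩ : Fin (k + 2)) = Fin.last (k + 1) := by
                apply Fin.ext; simp
              rw [this, hc] at h0
              norm_num at h0
          have hsplit2 := bsdVal_succ (Fin.init b)
          have htopz : (Fin.init b) (Fin.last k) = 0 := by
            rw [show (Fin.init b) (Fin.last k) = b (Fin.castSucc (Fin.last k)) from rfl]
            exact hadj
          have hIH2 := ih k (by omega) (Fin.init (Fin.init b)) (digits_init hb')
            (nonadj_init hnon')
          have hrec : (aseq (k + 3) : ℤ) = 2 ^ (k + 1) + (aseq (k + 1) : ℤ) := by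
            have := aseq_add_three k
            exact_mod_cast this
          rw [hsplit, hsplit2, htopz, hc]
          push_cast at hrec ⊢
          linarith

/-- Lower bound via negation. -/
lemma bsd_lower : ∀ j, ∀ b : Fin j → ℤ, IsBSDDigits b → NonAdj b →
    1 - (aseq (j + 1) : ℤ) ≤ bsdVal b := by
  intro j b hb hnon
  have := bsd_upper j (fun i => -b i) (digits_neg hb) (nonadj_neg hnon)
  rw [bsdVal_neg] at this
  linarith

/-- Elements of the NAF interval lie in `[a j, a (j+1) - 1]`. -/
lemma nafinterval_subset {j : ℕ} (hj : 1 ≤ j) :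
    NAFInterval j ⊆ Set.Icc (aseq j) (aseq (j + 1) - 1) := by
  intro n hn
  obtain ⟨b, ⟨hb, hnon, htop⟩, hval⟩ := hn
  match j, hj with
  | (m + 1), _ =>
    have hupper : (n : ℤ) ≤ (aseq (m + 2) : ℤ) - 1 := by
      rw [← hval]; exact bsd_upper (m + 1) b hb hnon
    have hlastI : (⟨m + 1 - 1, Nat.sub_lt (by omega) one_pos⟩ : Fin (m + 1)) = Fin.last m := by
      apply Fin.ext; simp
    have htop' : b (Fin.last m) ≠ 0 := by
      rw [← hlastI]; exact htop (by omega)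
    have hc := hb (Fin.last m)
    simp only [Set.mem_insert_iff, Set.mem_singleton_iff] at hc
    have hsplit := bsdVal_succ b
    have hlower : (aseq (m + 1) : ℤ) ≤ (n : ℤ) := by
      rcases hc with hc | hc | hc
      · -- top digit -1 : value negative, contradiction
        exfalso
        have hub' := bsd_upper m (Fin.init b) (digits_init hb) (nonadj_init hnon)
        have hple : (aseq (m + 1) : ℤ) ≤ 2 ^ m := by
          match m with
          | 0 => norm_num [aseq]
          | (l + 1) =>
            have := aseq_le_pow (k := l + 1) (by omega)
            calc (aseq (l + 2) : ℤ) ≤ (2 ^ (l + 1) : ℕ) := by exact_mod_cast this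
            _ = 2 ^ (l + 1) := by push_cast; ring
        have : (n : ℤ) < 0 := by
          rw [← hval, hsplit, hc]
          have : (0:ℤ) < 2 ^ m := by positivity
          linarith
        have : (0:ℤ) ≤ (n : ℤ) := by positivity
        omega
      · exact absurd hc htop'
      · -- top digit 1
        cases m with
        | zero =>
          have hb0 : bsdVal (Fin.init b) = 0 := by simp [bsdVal]
          rw [← hval, hsplit, hb0, hc]
          norm_num [aseq]
        | succ k =>
          have hadj : b ⟨k, by omega⟩ = 0 := by
            rcases hnon ⟨k, by omega⟩ (by simp) with h0 | h0
            · exact h0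
            · exfalso
              have : (⟨k + 1, by omega⟩ : Fin (k + 2)) = Fin.last (k + 1) := by
                apply Fin.ext; simp
              rw [this, hc] at h0
              norm_num at h0
          have hsplit2 := bsdVal_succ (Fin.init b)
          have htopz : (Fin.init b) (Fin.last k) = 0 := by
            rw [show (Fin.init b) (Fin.last k) = b (Fin.castSucc (Fin.last k)) from rfl]
            exact hadj
          have hlow := bsd_lower k (Fin.init (Fin.init b)) (digits_init (digits_init hb))
            (nonadj_init (nonadj_init hnon))
          have hrec : (aseq (k + 1) : ℤ) + (aseq (k + 2) : ℤ) = 2 ^ (k + 1) + 1 := by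
            have := aseq_sum (k := k + 1) (by omega)
            exact_mod_cast this
          rw [← hval, hsplit, hsplit2, htopz, hc]
          push_cast at hrec ⊢
          linarith
    constructor
    · exact_mod_cast hlower
    · show n ≤ aseq (m + 2) - 1
      have h2 : (n : ℤ) + 1 ≤ (aseq (m + 2) : ℤ) := by linarith
      have h3 : n + 1 ≤ aseq (m + 2) := by exact_mod_cast h2
      omega



open Polynomial

/-- Degree symmetry on the NAF interval: for `a m ≤ u < a (m+1)`,
`deg B (2^m - u) = deg B u`. -/
lemma Dsym : ∀ m, 1 ≤ m → ∀ u, aseq m ≤ u → u < aseq (m + 1) → DD (2 ^ m - u) = DD u := by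
  intro m
  induction m using Nat.strong_induction_on with
  | _ m ih =>
    intro hm u hu1 hu2
    match m, hm with
    | 1, _ =>
      have : u = 1 := by simp [aseq] at hu1 hu2; omega
      subst this; norm_num
    | 2, _ =>
      have : u = 2 := by simp [aseq, aseq_add_three] at hu1 hu2; omega
      subst this; norm_num
    | (j + 3), _ =>
      have hm3 : 3 ≤ j + 3 := by omega
      set m := j + 3 with hmdef
      -- arithmetic facts
      have hsum : aseq m + aseq (m + 1) = 2 ^ m + 1 := aseq_sum (by omega)
      have hsum1 : aseq (m - 1) + aseq m = 2 ^ (m - 1) + 1 := by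
        have := aseq_sum (k := m - 1) (by omega)
        rw [show m - 1 + 1 = m by omega] at this
        exact this
      have hub : aseq (m + 1) ≤ 2 * aseq m := aseq_ub (by omega)
      have hlb : 2 * aseq m ≤ aseq (m + 1) + 1 := aseq_lb (by omega)
      have hub1 : aseq m ≤ 2 * aseq (m - 1) := by
        have := aseq_ub (k := m - 1) (by omega)
        rw [show m - 1 + 1 = m by omega] at this
        exact this
      have hlb1 : 2 * aseq (m - 1) ≤ aseq m + 1 := by
        have := aseq_lb (k := m - 1) (by omega)
        rw [show m - 1 + 1 = m by omega] at this
        exact this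
      have ha2 : 2 ≤ aseq (m - 1) := aseq_two (by omega)
      have hpow : (2:ℕ) ^ m = 2 * 2 ^ (m - 1) := by
        conv_lhs => rw [show m = (m - 1) + 1 by omega]
        rw [pow_succ]; ring
      have hS1m := S1 (k := m) (by omega)
      rcases eq_or_ne u (aseq m) with hua | hua
      · -- u = a m
        subst hua
        rw [show 2 ^ m - aseq m = aseq (m + 1) - 1 by omega]
        have := S2 (k := m + 1) (by omega)
        rw [this.1, hS1m.1]
        omega
      rcases eq_or_ne u (aseq (m + 1) - 1) with hub' | hub'
      · -- u = a (m+1) - 1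
        subst hub'
        rw [show 2 ^ m - (aseq (m + 1) - 1) = aseq m by omega]
        have := S2 (k := m + 1) (by omega)
        rw [this.1, hS1m.1]
        omega
      rcases Nat.even_or_odd u with ⟨s, hs⟩ | ⟨s, hs⟩
      · -- u = 2s even
        have hs' : u = 2 * s := by omega
        have hr1 : aseq (m - 1) ≤ s := by omega
        have hr2 : s < aseq m := by omega
        have hIH := ih (m - 1) (by omega) (by omega) s hr1
          (by rw [show m - 1 + 1 = m by omega]; exact hr2)
        have hpos : 1 ≤ 2 ^ (m - 1) - s := by omega
        have he1 := DL_even (t := 2 ^ (m - 1) - s) hpos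
        have he2 := DL_even (t := s) (by omega)
        rw [hs', show 2 ^ m - 2 * s = 2 * (2 ^ (m - 1) - s) by omega, he1.1, he2.1, hIH]
      · -- u = 2s+1 odd
        have hs' : u = 2 * s + 1 := by omega
        have hr1 : aseq (m - 1) ≤ s := by omega
        have hr2 : s + 1 ≤ aseq m - 1 := by omega
        have hIHs := ih (m - 1) (by omega) (by omega) s hr1
          (by rw [show m - 1 + 1 = m by omega]; omega)
        have hIHs1 := ih (m - 1) (by omega) (by omega) (s + 1) (by omega)
          (by rw [show m - 1 + 1 = m by omega]; omega)
        have hpos : 1 ≤ 2 ^ (m - 1) - s - 1 := by omega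
        have hmax1 := DD_odd_max (t := 2 ^ (m - 1) - s - 1) hpos
        have hmax2 := DD_odd_max (t := s) (by omega)
        rw [hs', show 2 ^ m - (2 * s + 1) = 2 * (2 ^ (m - 1) - s - 1) + 1 by omega, hmax1,
          hmax2, show 2 ^ (m - 1) - s - 1 + 1 = 2 ^ (m - 1) - s by omega,
          show 2 ^ (m - 1) - s - 1 = 2 ^ (m - 1) - (s + 1) by omega, hIHs, hIHs1]
        exact Nat.max_comm _ _

/-- The main statement (C): for `a m ≤ u < a (m+1)`,
`deg B (2^(m+1)+u) = deg B (2^m - u) + 1` and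
`lc B (2^(m+1)+u) = lc B (2^m - u) + lc B u`. -/
lemma mainC : ∀ m, 1 ≤ m → ∀ u, aseq m ≤ u → u < aseq (m + 1) →
    DD (2 ^ (m + 1) + u) = DD (2 ^ m - u) + 1 ∧
    LL (2 ^ (m + 1) + u) = LL (2 ^ m - u) + LL u := by
  intro m
  induction m using Nat.strong_induction_on with
  | _ m ih =>
    intro hm u hu1 hu2
    match m, hm with
    | 1, _ =>
      have : u = 1 := by simp [aseq] at hu1 hu2; omega
      subst this
      norm_num [DD_five, LL_five, DD_one, LL_one]
    | 2, _ =>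
      have : u = 2 := by simp [aseq, aseq_add_three] at hu1 hu2; omega
      subst this
      have h10 := DL_even (t := 5) (by omega)
      have : (2:ℕ) ^ (2 + 1) + 2 = 2 * 5 := by norm_num
      rw [this, h10.1, h10.2, DD_five, LL_five]
      norm_num [DD_two, LL_two]
    | (j + 3), _ =>
      have hm3 : 3 ≤ j + 3 := by omega
      set m := j + 3 with hmdef
      have hsum : aseq m + aseq (m + 1) = 2 ^ m + 1 := aseq_sum (by omega)
      have hsum1 : aseq (m - 1) + aseq m = 2 ^ (m - 1) + 1 := by
        have := aseq_sum (k := m - 1) (by omega)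
        rw [show m - 1 + 1 = m by omega] at this
        exact this
      have hub : aseq (m + 1) ≤ 2 * aseq m := aseq_ub (by omega)
      have hlb : 2 * aseq m ≤ aseq (m + 1) + 1 := aseq_lb (by omega)
      have hub1 : aseq m ≤ 2 * aseq (m - 1) := by
        have := aseq_ub (k := m - 1) (by omega)
        rw [show m - 1 + 1 = m by omega] at this
        exact this
      have hlb1 : 2 * aseq (m - 1) ≤ aseq m + 1 := by
        have := aseq_lb (k := m - 1) (by omega)
        rw [show m - 1 + 1 = m by omega] at this
        exact this
      have ha2 : 2 ≤ aseq (m - 1) := aseq_two (by omega)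
      have hpow : (2:ℕ) ^ m = 2 * 2 ^ (m - 1) := by
        conv_lhs => rw [show m = (m - 1) + 1 by omega]
        rw [pow_succ]; ring
      have hpow1 : (2:ℕ) ^ (m + 1) = 2 * 2 ^ m := by rw [pow_succ]; ring
      have hS1m := S1 (k := m) (by omega)
      rcases eq_or_ne u (aseq m) with hua | hua
      · -- u = a m : use S45 at m+1, S2 at m+1, S1 at m
        subst hua
        have hS5 := (S45 (m + 1) (by omega)).2
        rw [show m + 1 - 1 = m by omega] at hS5
        have hS2 := S2 (k := m + 1) (by omega)
        rw [show 2 ^ m - aseq m = aseq (m + 1) - 1 by omega, hS5.1, hS5.2, hS2.1, hS2.2,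
          hS1m.2]
        omega
      rcases eq_or_ne u (aseq (m + 1) - 1) with hub' | hub'
      · -- u = a (m+1) - 1 : n = a (m+3) - 1
        subst hub'
        have hadd : aseq (m + 3) = 2 ^ (m + 1) + aseq (m + 1) := aseq_add_three m
        have hS2a := S2 (k := m + 3) (by omega)
        have hS2b := S2 (k := m + 1) (by omega)
        have hpos1 : 1 ≤ aseq (m + 1) := aseq_pos (by omega)
        rw [show 2 ^ (m + 1) + (aseq (m + 1) - 1) = aseq (m + 3) - 1 by omega,
          show 2 ^ m - (aseq (m + 1) - 1) = aseq m by omega]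
        constructor
        · rw [hS2a.1, hS1m.1]; omega
        · rw [hS2a.2, hS1m.2, hS2b.2]; omega
      rcases Nat.even_or_odd u with ⟨s, hs⟩ | ⟨s, hs⟩
      · -- u = 2s even
        have hs' : u = 2 * s := by omega
        have hr1 : aseq (m - 1) ≤ s := by omega
        have hr2 : s < aseq m := by omega
        have hIH := ih (m - 1) (by omega) (by omega) s hr1
          (by rw [show m - 1 + 1 = m by omega]; exact hr2)
        rw [show m - 1 + 1 = m by omega] at hIH
        have he1 := DL_even (t := 2 ^ m + s) (by omega)
        have he2 := DL_even (t := 2 ^ (m - 1) - s) (by omega)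
        have he3 := DL_even (t := s) (by omega)
        rw [hs', show 2 ^ (m + 1) + 2 * s = 2 * (2 ^ m + s) by omega,
          show 2 ^ m - 2 * s = 2 * (2 ^ (m - 1) - s) by omega,
          he1.1, he1.2, he2.1, he2.2, he3.2, hIH.1, hIH.2]
        omega
      · -- u = 2s+1 odd
        have hs' : u = 2 * s + 1 := by omega
        have hr1 : aseq (m - 1) ≤ s := by omega
        have hr2 : s + 1 ≤ aseq m - 1 := by omega
        have hIHs := ih (m - 1) (by omega) (by omega) s hr1
          (by rw [show m - 1 + 1 = m by omega]; omega)
        have hIHs1 := ih (m - 1) (by omega) (by omega) (s + 1) (by omega)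
          (by rw [show m - 1 + 1 = m by omega]; omega)
        rw [show m - 1 + 1 = m by omega] at hIHs hIHs1
        have hDs := Dsym (m - 1) (by omega) s hr1
          (by rw [show m - 1 + 1 = m by omega]; omega)
        have hDs1 := Dsym (m - 1) (by omega) (s + 1) (by omega)
          (by rw [show m - 1 + 1 = m by omega]; omega)
        -- decompositions
        have en : 2 ^ (m + 1) + u = 2 * (2 ^ m + s) + 1 := by omega
        have em : 2 ^ m - u = 2 * (2 ^ (m - 1) - (s + 1)) + 1 := by omega
        have eu : u = 2 * s + 1 := hs'
        have hposm : 1 ≤ 2 ^ (m - 1) - (s + 1) := by omega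
        have e1 : 2 ^ m + s + 1 = 2 ^ m + (s + 1) := by omega
        have e2 : 2 ^ (m - 1) - (s + 1) + 1 = 2 ^ (m - 1) - s := by omega
        rcases lt_trichotomy (DD s) (DD (s + 1)) with hc | hc | hc
        · -- DD s < DD (s+1)
          have ht : DD (2 ^ m + s) < DD (2 ^ m + s + 1) := by
            rw [e1, hIHs.1, hIHs1.1, hDs, hDs1]; omega
          have h1 := DL_odd_lt ht
          have ht2 : DD (2 ^ (m - 1) - (s + 1) + 1) < DD (2 ^ (m - 1) - (s + 1)) := by
            rw [e2, hDs, hDs1]; omega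
          have h2 := DL_odd_gt hposm ht2
          have h3 := DL_odd_lt (t := s) hc
          refine ⟨?_, ?_⟩
          · rw [en, em, h1.1, h2.1, e1, hIHs1.1]
          · rw [en, em, eu, h1.2, h2.2, h3.2, e1, hIHs1.2]
        · -- DD s = DD (s+1)
          have ht : DD (2 ^ m + s) = DD (2 ^ m + s + 1) := by
            rw [e1, hIHs.1, hIHs1.1, hDs, hDs1]; omega
          have h1 := DL_odd_eq (t := 2 ^ m + s) (by omega) ht
          have ht2 : DD (2 ^ (m - 1) - (s + 1)) = DD (2 ^ (m - 1) - (s + 1) + 1) := by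
            rw [e2, hDs, hDs1]; omega
          have h2 := DL_odd_eq hposm ht2
          have h3 := DL_odd_eq (t := s) (by omega) hc
          refine ⟨?_, ?_⟩
          · rw [en, em, h1.1, h2.1, hIHs.1, hDs, hDs1]; omega
          · rw [en, em, eu, h1.2, h2.2, h3.2, e1, e2, hIHs.2, hIHs1.2]; omega
        · -- DD s > DD (s+1)
          have ht : DD (2 ^ m + s + 1) < DD (2 ^ m + s) := by
            rw [e1, hIHs.1, hIHs1.1, hDs, hDs1]; omega
          have h1 := DL_odd_gt (t := 2 ^ m + s) (by omega) ht
          have ht2 : DD (2 ^ (m - 1) - (s + 1)) < DD (2 ^ (m - 1) - (s + 1) + 1) := by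
            rw [e2, hDs, hDs1]; omega
          have h2 := DL_odd_lt ht2
          have h3 := DL_odd_gt (t := s) (by omega) hc
          refine ⟨?_, ?_⟩
          · rw [en, em, h1.1, h2.1, e2, hIHs.1]
          · rw [en, em, eu, h1.2, h2.2, h3.2, e2, hIHs.2]


end SternAux

open SternAux in
theorem stern_deg_lc_C (k v : ℕ) (hk : 3 ≤ k)
    (hv : v < (NAFInterval (k - 2)).ncard) :
    (sternP (2 ^ (k - 1) + aseq (k - 2) + v)).natDegree
      = (sternP (2 ^ (k - 2) - (aseq (k - 2) + v))).natDegree + 1 ∧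
    (sternP (2 ^ (k - 1) + aseq (k - 2) + v)).leadingCoeff
      = (sternP (2 ^ (k - 2) - (aseq (k - 2) + v))).leadingCoeff
        + (sternP (aseq (k - 2) + v)).leadingCoeff := by
  have hj : 1 ≤ k - 2 := by omega
  set j := k - 2 with hjdef
  have hpos := aseq_pos hj
  have hlt := aseq_lt hj
  have hcard : (NAFInterval j).ncard ≤ aseq (j + 1) - aseq j := by
    have hsub := nafinterval_subset hj
    have hfin : (Set.Icc (aseq j) (aseq (j + 1) - 1)).Finite := Set.finite_Icc _ _
    have hle := Set.ncard_le_ncard hsub hfin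
    have hicc : (Set.Icc (aseq j) (aseq (j + 1) - 1)).ncard
        = aseq (j + 1) - 1 + 1 - aseq j := by
      rw [← Finset.coe_Icc, Set.ncard_coe_finset, Nat.card_Icc]
    omega
  have hu2 : aseq j + v < aseq (j + 1) := by omega
  have hmain := mainC j hj (aseq j + v) (by omega) hu2
  have e1 : k - 1 = j + 1 := by omega
  rw [e1, show 2 ^ (j + 1) + aseq j + v = 2 ^ (j + 1) + (aseq j + v) by omega]
  exact hmain
end
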